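/- Let (X, 𝔅, μ, T) be an ergodic measure-preserving dynamical system, A ∈ 𝔅 with μ(A) > 0, and let (E_n) be measurable sets with μ(E_n) > 0 for all n such that μ_{E_n}({r_{E_n} < r_A}) → 0 as n → ∞. Then μ((E_n)'_A)/μ(E_n) → 1 as n → ∞, where (E_n)'_A is the shadow of E_n in A. -/

import Mathlib

open MeasureTheory Filter Set ProbabilityTheory
open scoped ENNReal Topology ENat

noncomputable section

variable {X : Type*}

/-- The instant of the `i`-th visit (after time `0`) of the orbit of `x` under `T` to `B`,
with the convention that `hitInstant T B x 0 = 0` and the value is `⊤` if there is no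
such visit. -/
def hitInstant (T : X → X) (B : Set X) (x : X) : ℕ → ℕ∞
  | 0 => 0
  | (i+1) => sInf {m : ℕ∞ | ∃ n : ℕ, hitInstant T B x i < (n : ℕ∞) ∧ T^[n] x ∈ B ∧ m = (n : ℕ∞)}

/-- The first hitting time `r_B(x) = inf {k ≥ 1 : T^k x ∈ B}` (with value `⊤` if the orbit
never enters `B`). -/
def hitTime (T : X → X) (B : Set X) (x : X) : ℕ∞ := hitInstant T B x 1

/-- The `i`-th interarrival time (gap between the `i`-th and `(i+1)`-st visits);
`interGap T B 0 x` is the first hitting time `r_B^{(1)}(x)`, and once some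
visit fails to occur, all subsequent gaps are `⊤`. -/
def interGap (T : X → X) (B : Set X) (i : ℕ) (x : X) : ℝ≥0∞ :=
  if hitInstant T B x i = ⊤ then ⊤
  else ((hitInstant T B x (i+1) - hitInstant T B x i : ℕ∞) : ℝ≥0∞)

/-- The shadow set `E'_A = ⋃_{k ≥ 0} (A ∩ {r_A > k} ∩ T^{-k} E)` of `E` in `A`. -/
def shadow (T : X → X) (A E : Set X) : Set X :=
  ⋃ k : ℕ, A ∩ {x | (k : ℕ∞) < hitTime T A x} ∩ (T^[k]) ⁻¹' E

/-- The induced (first-return) map `T_A(x) = T^{r_A(x)}(x)` (junk value `x` if the orbit of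
`x` never returns to `A`). -/
def inducedMap (T : X → X) (A : Set X) (x : X) : X :=
  T^[sInf {n : ℕ | 1 ≤ n ∧ T^[n] x ∈ A}] x

/-- The rescaled interarrival process `c · Φ_B : x ↦ (c · r_B^{(i)}(x))_{i ≥ 1}`,
as a random element of `ℕ → ℝ≥0∞`. -/
def rescaledProcess (T : X → X) (B : Set X) (c : ℝ≥0∞) (x : X) : ℕ → ℝ≥0∞ :=
  fun i => c * interGap T B i x

/-- Convergence in distribution: the laws of the random elements `f n : X → (ℕ → ℝ≥0∞)`
under the measures `P n` converge weakly to `ν` (tested against bounded continuous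
real functions, with `ℕ → ℝ≥0∞` carrying the product topology). -/
def ConvInDist [MeasurableSpace X] (P : ℕ → Measure X)
    (f : ℕ → X → (ℕ → ℝ≥0∞)) (ν : Measure (ℕ → ℝ≥0∞)) : Prop :=
  ∀ g : BoundedContinuousFunction (ℕ → ℝ≥0∞) ℝ,
    Tendsto (fun n => ∫ x, g (f n x) ∂(P n)) atTop (𝓝 (∫ y, g y ∂ν))

end


section auxiliary
variable {X : Type*}

private lemma hitTime_def' (T : X → X) (A : Set X) (x : X) :
    hitTime T A x = sInf {m : ℕ∞ | ∃ n : ℕ, (0:ℕ∞) < (n:ℕ∞) ∧ T^[n] x ∈ A ∧ m = (n:ℕ∞)} := by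
  simp [hitTime, hitInstant]

private lemma lt_hitTime_iff {T : X → X} {A : Set X} {k : ℕ} {x : X} :
    (k : ℕ∞) < hitTime T A x ↔ ∀ i, 1 ≤ i → i ≤ k → T^[i] x ∉ A := by
  rw [hitTime_def']
  constructor
  · intro h i h1 hk hmem
    have hi : (i:ℕ∞) ∈ {m : ℕ∞ | ∃ n : ℕ, (0:ℕ∞) < (n:ℕ∞) ∧ T^[n] x ∈ A ∧ m = (n:ℕ∞)} :=
      ⟨i, by exact_mod_cast h1, hmem, rfl⟩
    exact absurd (sInf_le hi) (not_le.2 (lt_of_le_of_lt (by exact_mod_cast hk) h))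
  · intro h
    refine lt_of_lt_of_le (show (k:ℕ∞) < ((k+1:ℕ):ℕ∞) by exact_mod_cast Nat.lt_succ_self k)
      (le_sInf ?_)
    rintro m ⟨n, hn0, hnA, rfl⟩
    have hn1 : 1 ≤ n := by exact_mod_cast hn0
    have : ¬ n ≤ k := fun hle => h n hn1 hle hnA
    exact_mod_cast Nat.succ_le_of_lt (not_le.1 this)

/-- `QQ T A m = {x | r_A(x) > m}`. -/
private def QQ (T : X → X) (A : Set X) (m : ℕ) : Set X :=
  ⋂ (i : ℕ) (_ : 1 ≤ i) (_ : i ≤ m), T^[i] ⁻¹' Aᶜ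

private lemma mem_QQ {T : X → X} {A : Set X} {m : ℕ} {x : X} :
    x ∈ QQ T A m ↔ ∀ i, 1 ≤ i → i ≤ m → T^[i] x ∉ A := by
  simp [QQ]

private lemma setQQ (T : X → X) (A : Set X) (k : ℕ) :
    {x | (k : ℕ∞) < hitTime T A x} = QQ T A k := by
  ext x; rw [Set.mem_setOf_eq, lt_hitTime_iff, ← mem_QQ]

variable [MeasurableSpace X] {T : X → X} {A E : Set X} {μ : Measure X}

private lemma QQ_measurable (hT : Measurable T) (hA : MeasurableSet A) (m : ℕ) :
    MeasurableSet (QQ T A m) :=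
  MeasurableSet.iInter fun i => MeasurableSet.iInter fun _ =>
    MeasurableSet.iInter fun _ => hA.compl.preimage (hT.iterate i)

private lemma B_eq (T : X → X) (A E : Set X) :
    {x | hitTime T E x < hitTime T A x} =
      ⋃ n : ℕ, ({x | (n : ℕ∞) < hitTime T E x})ᶜ ∩ {x | (n : ℕ∞) < hitTime T A x} := by
  ext x
  simp only [Set.mem_setOf_eq, mem_iUnion, Set.mem_inter_iff, Set.mem_compl_iff, not_lt]
  constructor
  · intro h
    have hne : hitTime T E x ≠ ⊤ := fun ht => by simp [ht] at h
    obtain ⟨n, hn⟩ : ∃ n : ℕ, hitTime T E x = (n : ℕ∞) := by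
      lift hitTime T E x to ℕ using hne with n hn
      exact ⟨n, rfl⟩
    exact ⟨n, le_of_eq hn, hn ▸ h⟩
  · rintro ⟨n, h1, h2⟩
    exact lt_of_le_of_lt h1 h2

private lemma B_measurable (hT : Measurable T) (hA : MeasurableSet A) (hE : MeasurableSet E) :
    MeasurableSet {x | hitTime T E x < hitTime T A x} := by
  rw [B_eq]
  exact MeasurableSet.iUnion fun n =>
    (((setQQ T E n) ▸ (QQ_measurable hT hE n)).compl).inter
      ((setQQ T A n) ▸ QQ_measurable hT hA n)

private lemma good_disjoint (T : X → X) (A E : Set X) :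
    Pairwise (Function.onFun Disjoint fun m =>
      A ∩ QQ T A m ∩ T^[m] ⁻¹' (E \ {x | hitTime T E x < hitTime T A x})) := by
  have key : ∀ m m', m < m' → Disjoint
      (A ∩ QQ T A m ∩ T^[m] ⁻¹' (E \ {x | hitTime T E x < hitTime T A x}))
      (A ∩ QQ T A m' ∩ T^[m'] ⁻¹' (E \ {x | hitTime T E x < hitTime T A x})) := by
    intro m m' hmm'
    refine Set.disjoint_left.2 fun x hx hx' => ?_
    obtain ⟨⟨-, hQ⟩, hF⟩ := hx
    obtain ⟨⟨-, hQ'⟩, hF'⟩ := hx'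
    rw [Set.mem_preimage, Set.mem_diff] at hF hF'
    set y := T^[m] x with hy
    have hEy : T^[m'-m] y ∈ E := by
      rw [hy, ← Function.iterate_add_apply, Nat.sub_add_cancel (le_of_lt hmm')]
      exact hF'.1
    have hrE : hitTime T E y ≤ ((m'-m : ℕ) : ℕ∞) := by
      by_contra hlt
      push_neg at hlt
      exact (lt_hitTime_iff.1 hlt) (m'-m) (by omega) le_rfl hEy
    have hrA : ((m'-m : ℕ) : ℕ∞) < hitTime T A y := by
      rw [lt_hitTime_iff]
      intro i hi1 hi2
      have := mem_QQ.1 hQ' (i + m) (by omega) (by omega)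
      rwa [hy, ← Function.iterate_add_apply]
    exact hF.2 (lt_of_le_of_lt hrE hrA)
  intro m m' hne
  rcases Ne.lt_or_gt hne with h | h
  · exact key m m' h
  · exact (key m' m h).symm

private lemma never_null (hErg : Ergodic T μ) [IsProbabilityMeasure μ]
    (hA : MeasurableSet A) (hApos : 0 < μ A) :
    μ (⋂ n : ℕ, T^[n] ⁻¹' Aᶜ) = 0 := by
  set N : Set X := ⋂ n : ℕ, T^[n] ⁻¹' Aᶜ with hN
  have hT : Measurable T := hErg.toMeasurePreserving.measurable
  have hNmeas : MeasurableSet N :=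
    MeasurableSet.iInter fun n => hA.compl.preimage (hT.iterate n)
  have hNsub : N ⊆ T ⁻¹' N := by
    intro x hx
    simp only [hN, Set.mem_iInter, Set.mem_preimage, Set.mem_compl_iff] at hx ⊢
    intro n
    have := hx (n+1)
    rwa [Function.iterate_succ_apply] at this
  have hmono : Monotone fun n : ℕ => T^[n] ⁻¹' N := by
    intro a b hab
    induction hab with
    | refl => exact le_rfl
    | step _ ih => exact le_trans ih (by
        intro x hx
        rw [Set.mem_preimage] at hx ⊢
        rw [Function.iterate_succ_apply']
        exact hNsub hx)
  set S : Set X := ⋃ n : ℕ, T^[n] ⁻¹' N with hS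
  have hSmeas : MeasurableSet S := MeasurableSet.iUnion fun n => hNmeas.preimage (hT.iterate n)
  have hSinv : T ⁻¹' S = S := by
    apply Set.Subset.antisymm
    · intro x hx
      rw [Set.mem_preimage, hS, Set.mem_iUnion] at hx
      obtain ⟨n, hn⟩ := hx
      rw [hS, Set.mem_iUnion]
      exact ⟨n+1, by rwa [Set.mem_preimage, Function.iterate_succ_apply]⟩
    · intro x hx
      rw [hS, Set.mem_iUnion] at hx
      obtain ⟨n, hn⟩ := hx
      rw [Set.mem_preimage, hS, Set.mem_iUnion]
      refine ⟨n, ?_⟩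
      rw [Set.mem_preimage] at hn ⊢
      rw [← Function.iterate_succ_apply, Function.iterate_succ_apply']
      exact hNsub hn
  have hμiter : ∀ n : ℕ, μ (T^[n] ⁻¹' N) = μ N := fun n =>
    (hErg.toMeasurePreserving.iterate n).measure_preimage hNmeas.nullMeasurableSet
  have hμS : μ S = μ N := by
    rw [hS, hmono.measure_iUnion]
    simp [hμiter]
  rcases hErg.ae_empty_or_univ hSmeas hSinv with h | h
  · have : μ S = 0 := by
      rw [measure_congr h]; simp
    rw [hμS] at this; exact this
  · exfalso
    have hμS1 : μ S = 1 := by rw [measure_congr h]; simp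
    have hN1 : μ N = 1 := by rw [← hμS]; exact hμS1
    have hsub : N ⊆ Aᶜ := by
      intro x hx
      have := Set.mem_iInter.1 hx 0
      simpa using this
    have : (1:ℝ≥0∞) ≤ μ Aᶜ := hN1 ▸ measure_mono hsub
    have hAc : μ Aᶜ = 1 := le_antisymm prob_le_one this
    exact absurd ((prob_compl_eq_one_iff hA).1 hAc) (ne_of_gt hApos)

private lemma decomp (hT : MeasurePreserving T μ μ) (hA : MeasurableSet A)
    (F : Set X) (hF : MeasurableSet F) (k : ℕ) :
    μ F = (∑ m ∈ Finset.range (k+1), μ (A ∩ QQ T A m ∩ T^[m] ⁻¹' F)) +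
      μ (T^[k] ⁻¹' F ∩ ⋂ ℓ ∈ Finset.range (k+1), T^[ℓ] ⁻¹' Aᶜ) := by
  classical
  have hTm : Measurable T := hT.measurable
  set C : ℕ → Set X := fun ℓ => T^[ℓ] ⁻¹' (A ∩ QQ T A (k-ℓ) ∩ T^[k-ℓ] ⁻¹' F) with hC
  set R : Set X := T^[k] ⁻¹' F ∩ ⋂ ℓ ∈ Finset.range (k+1), T^[ℓ] ⁻¹' Aᶜ with hR
  have hmA : ∀ m, MeasurableSet (A ∩ QQ T A m ∩ T^[m] ⁻¹' F) := fun m =>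
    ((hA.inter (QQ_measurable hTm hA m)).inter (hF.preimage (hTm.iterate m)))
  have hCm : ∀ ℓ, MeasurableSet (C ℓ) := fun ℓ => (hmA (k-ℓ)).preimage (hTm.iterate ℓ)
  have hRm : MeasurableSet R :=
    (hF.preimage (hTm.iterate k)).inter
      (MeasurableSet.biInter (Finset.range (k+1)).countable_toSet
        fun ℓ _ => hA.compl.preimage (hTm.iterate ℓ))
  have hmemC : ∀ ℓ ≤ k, ∀ x, x ∈ C ℓ ↔
      (T^[ℓ] x ∈ A ∧ (∀ j, ℓ < j → j ≤ k → T^[j] x ∉ A) ∧ T^[k] x ∈ F) := by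
    intro ℓ hℓ x
    simp only [hC, Set.mem_preimage, Set.mem_inter_iff, mem_QQ]
    constructor
    · rintro ⟨⟨h1, h2⟩, h3⟩
      refine ⟨h1, fun j hj1 hj2 => ?_, ?_⟩
      · have := h2 (j - ℓ) (by omega) (by omega)
        rwa [← Function.iterate_add_apply, Nat.sub_add_cancel (le_of_lt hj1)] at this
      · rwa [← Function.iterate_add_apply, Nat.sub_add_cancel hℓ] at h3
    · rintro ⟨h1, h2, h3⟩
      refine ⟨⟨h1, fun i hi1 hi2 => ?_⟩, ?_⟩
      · rw [← Function.iterate_add_apply]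
        exact h2 (i + ℓ) (by omega) (by omega)
      · rw [← Function.iterate_add_apply, Nat.sub_add_cancel hℓ]
        exact h3
  have hdecomp : T^[k] ⁻¹' F = (⋃ ℓ ∈ Finset.range (k+1), C ℓ) ∪ R := by
    apply Set.Subset.antisymm
    · intro x hx
      by_cases hc : ∃ ℓ, ℓ ≤ k ∧ T^[ℓ] x ∈ A
      · obtain ⟨ℓ₀, hℓ₀, hℓ₀A⟩ := hc
        set P : ℕ → Prop := fun ℓ => T^[ℓ] x ∈ A with hP
        set L := Nat.findGreatest P k with hL
        have hPL : P L := Nat.findGreatest_spec hℓ₀ hℓ₀A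
        have hLk : L ≤ k := Nat.findGreatest_le k
        have hxC : x ∈ C L := (hmemC L hLk x).2
          ⟨hPL, fun j hj1 hj2 => Nat.findGreatest_is_greatest hj1 hj2, hx⟩
        exact Set.mem_union_left _
          (Set.mem_biUnion (Finset.mem_range.2 (Nat.lt_succ_of_le hLk)) hxC)
      · push_neg at hc
        refine Set.mem_union_right _ ⟨hx, ?_⟩
        simp only [Set.mem_iInter, Finset.mem_range, Set.mem_preimage, Set.mem_compl_iff]
        intro ℓ hℓ
        exact hc ℓ (by omega)
    · apply Set.union_subset
      · refine Set.iUnion₂_subset fun ℓ hℓ => ?_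
        intro x hx
        exact ((hmemC ℓ (by simpa using Nat.lt_succ_iff.1 (Finset.mem_range.1 hℓ)) x).1 hx).2.2
      · exact Set.inter_subset_left
  have key : ∀ a b, a < b → b ≤ k → Disjoint (C a) (C b) := by
    intro a b h hbk
    refine Set.disjoint_left.2 fun x hxa hxb => ?_
    have h1 := (hmemC a (by omega) x).1 hxa
    have h2 := (hmemC b hbk x).1 hxb
    exact h1.2.1 b h hbk h2.1
  have hdisjC : (↑(Finset.range (k+1)) : Set ℕ).PairwiseDisjoint C := by
    intro a ha b hb hab
    simp only [Finset.coe_range, Set.mem_Iio] at ha hb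
    rcases Ne.lt_or_gt hab with h | h
    · exact key a b h (by omega)
    · exact (key b a h (by omega)).symm
  have hdisjR : Disjoint (⋃ ℓ ∈ Finset.range (k+1), C ℓ) R := by
    refine Set.disjoint_left.2 fun x hx hxR => ?_
    obtain ⟨ℓ, hℓ, hxC⟩ := Set.mem_iUnion₂.1 hx
    have hℓk : ℓ ≤ k := by simpa using Nat.lt_succ_iff.1 (Finset.mem_range.1 hℓ)
    have hxA := ((hmemC ℓ hℓk x).1 hxC).1
    have := hxR.2
    simp only [Set.mem_iInter, Finset.mem_range, Set.mem_preimage, Set.mem_compl_iff] at this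
    exact this ℓ (by omega) hxA
  have step : μ (T^[k] ⁻¹' F) = (∑ ℓ ∈ Finset.range (k+1), μ (C ℓ)) + μ R := by
    rw [hdecomp, measure_union hdisjR hRm,
      measure_biUnion_finset hdisjC fun ℓ _ => hCm ℓ]
  have hCval : ∀ ℓ, μ (C ℓ) = μ (A ∩ QQ T A (k-ℓ) ∩ T^[k-ℓ] ⁻¹' F) := fun ℓ =>
    (hT.iterate ℓ).measure_preimage (hmA (k-ℓ)).nullMeasurableSet
  have hFval : μ (T^[k] ⁻¹' F) = μ F :=
    (hT.iterate k).measure_preimage hF.nullMeasurableSet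
  rw [← hFval, step]
  congr 1
  simp only [hCval]
  rw [← Finset.sum_range_reflect]
  apply Finset.sum_congr rfl
  intro ℓ hℓ
  have h1 : k + 1 - 1 - ℓ = k - ℓ := by omega
  have h2 : k - (k - ℓ) = ℓ := by
    have := Finset.mem_range.1 hℓ; omega
  rw [h1, h2]

private lemma kac (hErg : Ergodic T μ) [IsProbabilityMeasure μ]
    (hA : MeasurableSet A) (hApos : 0 < μ A) (F : Set X) (hF : MeasurableSet F) :
    ∑' m : ℕ, μ (A ∩ QQ T A m ∩ T^[m] ⁻¹' F) = μ F := by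
  have hT : MeasurePreserving T μ μ := hErg.toMeasurePreserving
  have hTm : Measurable T := hT.measurable
  set a : ℕ → ℝ≥0∞ := fun m => μ (A ∩ QQ T A m ∩ T^[m] ⁻¹' F) with ha
  set D : ℕ → Set X := fun k => ⋂ ℓ ∈ Finset.range (k+1), T^[ℓ] ⁻¹' Aᶜ with hD
  have hDanti : Antitone D := by
    intro i j hij
    intro x hx
    simp only [hD, Set.mem_iInter, Finset.mem_range] at hx ⊢
    exact fun ℓ hℓ => hx ℓ (by omega)
  have hDmeas : ∀ k, MeasurableSet (D k) := fun k =>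
    MeasurableSet.biInter (Finset.range (k+1)).countable_toSet
      fun ℓ _ => hA.compl.preimage (hTm.iterate ℓ)
  have hDiInter : ⋂ k, D k = ⋂ n : ℕ, T^[n] ⁻¹' Aᶜ := by
    apply Set.Subset.antisymm
    · intro x hx
      simp only [Set.mem_iInter] at hx ⊢
      intro n
      have := hx n
      simp only [hD, Set.mem_iInter, Finset.mem_range] at this
      exact this n (by omega)
    · intro x hx
      simp only [Set.mem_iInter] at hx
      simp only [hD, Set.mem_iInter, Finset.mem_range]
      exact fun k ℓ _ => hx ℓ
  have hDtend : Tendsto (fun k => μ (D k)) atTop (𝓝 0) := by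
    have := tendsto_measure_iInter_atTop (μ := μ) (s := D)
      (fun k => (hDmeas k).nullMeasurableSet) hDanti ⟨0, measure_ne_top μ _⟩
    rwa [hDiInter, never_null hErg hA hApos] at this
  have hle : ∀ k, (∑ m ∈ Finset.range (k+1), a m) ≤ μ F := fun k => by
    rw [decomp hT hA F hF k]; exact le_add_right le_rfl
  have htsum_le : ∑' m, a m ≤ μ F := by
    rw [ENNReal.tsum_eq_iSup_sum]
    apply iSup_le
    intro s
    rcases s.eq_empty_or_nonempty with rfl | hs
    · simp
    · obtain ⟨k, hk⟩ := s.exists_le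
      exact le_trans (Finset.sum_le_sum_of_subset fun i hi =>
        Finset.mem_range.2 (by have := hk i hi; omega)) (hle k)
  have hge : μ F ≤ ∑' m, a m := by
    have hub : ∀ k, μ F ≤ (∑' m, a m) + μ (D k) := fun k => by
      rw [decomp hT hA F hF k]
      exact add_le_add (ENNReal.sum_le_tsum _) (measure_mono Set.inter_subset_right)
    have htnd : Tendsto (fun k => (∑' m, a m) + μ (D k)) atTop (𝓝 ((∑' m, a m) + 0)) :=
      (Tendsto.const_add _ hDtend)
    rw [add_zero] at htnd
    exact ge_of_tendsto' htnd hub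
  exact le_antisymm htsum_le hge

end auxiliary

/-- If `(E_n)` are sets of positive measure with
`μ_{E_n}({r_{E_n} < r_A}) → 0`, then `μ((E_n)'_A) / μ(E_n) → 1`. -/
theorem statement1 {X : Type*} [MetricSpace X] [MeasurableSpace X] [BorelSpace X]
    (T : X → X) (μ : Measure X) [IsProbabilityMeasure μ] (hErg : Ergodic T μ)
    (A : Set X) (hA : MeasurableSet A) (hApos : 0 < μ A)
    (E : ℕ → Set X) (hE : ∀ n, MeasurableSet (E n)) (hEpos : ∀ n, 0 < μ (E n))
    (h2 : Tendsto (fun n => μ[|E n] {x | hitTime T (E n) x < hitTime T A x}) atTop (𝓝 0)) :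
    Tendsto (fun n => μ (shadow T A (E n)) / μ (E n)) atTop (𝓝 1) := by
  have hT : MeasurePreserving T μ μ := hErg.toMeasurePreserving
  have hTm : Measurable T := hT.measurable
  set B : ℕ → Set X := fun n => {x | hitTime T (E n) x < hitTime T A x} with hB
  have hBm : ∀ n, MeasurableSet (B n) := fun n => B_measurable hTm hA (hE n)
  have hshadow : ∀ n, shadow T A (E n) = ⋃ m : ℕ, A ∩ QQ T A m ∩ T^[m] ⁻¹' (E n) := by
    intro n
    unfold shadow
    simp only [setQQ]
  -- upper bound : μ (shadow) ≤ μ E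
  have hupper : ∀ n, μ (shadow T A (E n)) ≤ μ (E n) := fun n => by
    rw [hshadow n, ← kac hErg hA hApos (E n) (hE n)]
    exact measure_iUnion_le _
  -- lower bound : μ (E \ B) ≤ μ (shadow)
  have hlower : ∀ n, μ (E n \ B n) ≤ μ (shadow T A (E n)) := fun n => by
    rw [hshadow n, ← kac hErg hA hApos (E n \ B n) ((hE n).diff (hBm n))]
    rw [← measure_iUnion (good_disjoint T A (E n)) (fun m =>
      ((hA.inter (QQ_measurable hTm hA m)).inter
        (((hE n).diff (hBm n)).preimage (hTm.iterate m))))]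
    exact measure_mono (Set.iUnion_mono fun m =>
      Set.inter_subset_inter_right _ (Set.preimage_mono Set.diff_subset))
  -- ratio bounds
  have hEne : ∀ n, μ (E n) ≠ 0 := fun n => (hEpos n).ne'
  have hEnetop : ∀ n, μ (E n) ≠ ⊤ := fun n => measure_ne_top μ _
  have hub : ∀ n, μ (shadow T A (E n)) / μ (E n) ≤ 1 := fun n => by
    rw [← ENNReal.div_self (hEne n) (hEnetop n)]
    exact ENNReal.div_le_div_right (hupper n) _
  have hcond : ∀ n, μ[|E n] (B n) = μ (E n ∩ B n) / μ (E n) := fun n => by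
    rw [ProbabilityTheory.cond_apply (hE n) μ (B n), ENNReal.div_eq_inv_mul]
  have hlb : ∀ n, 1 - μ[|E n] (B n) ≤ μ (shadow T A (E n)) / μ (E n) := by
    intro n
    rw [tsub_le_iff_right, hcond n, ENNReal.div_add_div_same]
    calc (1:ℝ≥0∞) = μ (E n) / μ (E n) := (ENNReal.div_self (hEne n) (hEnetop n)).symm
      _ ≤ (μ (E n \ B n) + μ (E n ∩ B n)) / μ (E n) := by
          refine ENNReal.div_le_div_right ?_ _
          refine le_trans (measure_mono ?_) (measure_union_le _ _)
          intro x hx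
          by_cases hxB : x ∈ B n
          · exact Or.inr ⟨hx, hxB⟩
          · exact Or.inl ⟨hx, hxB⟩
      _ ≤ (μ (shadow T A (E n)) + μ (E n ∩ B n)) / μ (E n) :=
          ENNReal.div_le_div_right (add_le_add (hlower n) le_rfl) _
  -- squeeze
  have htend : Tendsto (fun n => 1 - μ[|E n] (B n)) atTop (𝓝 1) := by
    have := ENNReal.Tendsto.sub (tendsto_const_nhds (x := (1:ℝ≥0∞)) (f := atTop)) h2
      (Or.inl ENNReal.one_ne_top)
    simpa using this
  exact tendsto_of_tendsto_of_tendsto_of_le_of_le htend tendsto_const_nhds hlb hub
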